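/- Let p be a prime, d ≥ 1, s ≥ 0, and N, u ∈ Z^d with N ≥ 0, u ≥ 0. Define B(N, m) = (∑_i N_i m_i)!/∏_i (m_i!)^{N_i}. Then the p-adic valuation of B(N, p^s·u)/B(N, u) is zero, i.e., v_p(B(N, p^s·u)) = v_p(B(N, u)). -/

import Mathlib

/-- `B(N, m) = (∑ᵢ Nᵢ mᵢ)! / ∏ᵢ (mᵢ!)^{Nᵢ}`. -/
def Bfun {d : ℕ} (N m : Fin d → ℕ) : ℚ :=
  ((∑ i, N i * m i).factorial : ℚ) / ∏ i, ((m i).factorial : ℚ) ^ (N i)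

lemma padicValRat_prod (p : ℕ) [Fact p.Prime] {d : ℕ} (f : Fin d → ℚ)
    (hf : ∀ i, f i ≠ 0) :
    padicValRat p (∏ i, f i) = ∑ i, padicValRat p (f i) := by
  classical
  induction d with
  | zero => simp [padicValRat.one]
  | succ n ih =>
    rw [Fin.prod_univ_succ, Fin.sum_univ_succ,
      padicValRat.mul (hf 0) (Finset.prod_ne_zero_iff.2 fun i _ => hf i.succ),
      ih (fun i => f i.succ) (fun i => hf i.succ)]

lemma padicValRat_Bfun (p : ℕ) [Fact p.Prime] {d : ℕ} (N u : Fin d → ℕ) :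
    padicValRat p (Bfun N u)
      = (padicValNat p (∑ i, N i * u i).factorial : ℤ)
        - ∑ i, (N i : ℤ) * padicValNat p ((u i).factorial) := by
  have hnum : ((∑ i, N i * u i).factorial : ℚ) ≠ 0 := by
    exact_mod_cast (Nat.factorial_pos _).ne'
  have hfi : ∀ i : Fin d, (((u i).factorial : ℚ)) ^ (N i) ≠ 0 := fun i =>
    pow_ne_zero _ (by exact_mod_cast (Nat.factorial_pos _).ne')
  have hden : (∏ i, ((u i).factorial : ℚ) ^ (N i)) ≠ 0 :=
    Finset.prod_ne_zero_iff.2 fun i _ => hfi i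
  rw [Bfun, padicValRat.div hnum hden, padicValRat_prod p _ hfi]
  congr 1
  · simp [padicValRat.of_nat]
  · apply Finset.sum_congr rfl
    intro i _
    rw [padicValRat.pow (q := _),
      padicValRat.of_nat]

/-- `v_p(B(N, pˢ u)/B(N, u)) = 0`, i.e. `v_p(B(N, pˢ u)) = v_p(B(N, u))`. -/
theorem stmt13 (p : ℕ) [Fact p.Prime] (d : ℕ) (hd : 0 < d) (s : ℕ)
    (N u : Fin d → ℕ) :
    padicValRat p (Bfun N (fun i => p ^ s * u i)) = padicValRat p (Bfun N u) := by
  induction s with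
  | zero => simp
  | succ s ih =>
    rw [padicValRat_Bfun, padicValRat_Bfun] at ih ⊢
    have h1 : ∀ i, p ^ (s + 1) * u i = p * (p ^ s * u i) := by
      intro i; ring
    have h2 : (∑ i, N i * (p ^ (s + 1) * u i)) = p * ∑ i, N i * (p ^ s * u i) := by
      rw [Finset.mul_sum]; apply Finset.sum_congr rfl; intro i _; rw [h1]; ring
    rw [← ih]
    simp only [h1]
    rw [show (∑ i, N i * (p * (p ^ s * u i))) = p * ∑ i, N i * (p ^ s * u i) by
      rw [Finset.mul_sum]; apply Finset.sum_congr rfl; intro i _; ring]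
    simp only [padicValNat_factorial_mul]
    push_cast
    simp only [mul_add, Finset.sum_add_distrib]
    ring
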